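/- (Smoothing inequality) Let ζ and η be random variables on the same probability space, a ∈ ℝ, σ > 0, and ε > 0. Then ρ(F_{ζ+η}, Φ_{a,σ}) ≤ ρ(F_ζ, Φ_{a,σ}) + [2Φ_{0,σ}(ε/2) − 1] + P(|η| > ε), where ρ is the Kolmogorov distance. -/

import Mathlib

open MeasureTheory Real

/-- The normal distribution function with mean `a` and standard deviation `σ`. -/
noncomputable def normCDF (a σ x : ℝ) : ℝ :=
  (σ * Real.sqrt (2 * Real.pi))⁻¹ * ∫ z in Set.Iic x, Real.exp (-(z - a) ^ 2 / (2 * σ ^ 2))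

/-- The uniform (Kolmogorov) distance between two distribution functions. -/
noncomputable def kolmDist (H G : ℝ → ℝ) : ℝ := ⨆ x : ℝ, |H x - G x|

/-- The distribution function `F_ξ(x) = P(ξ < x)` of a random variable `ξ`. -/
noncomputable def cdf {Ω : Type*} [MeasurableSpace Ω] (P : Measure Ω) (ξ : Ω → ℝ) (x : ℝ) : ℝ :=
  (P {ω | ξ ω < x}).toReal

section aux

variable {a σ ε : ℝ}

lemma gauss_eq (a σ : ℝ) : (fun z : ℝ => Real.exp (-(z - a) ^ 2 / (2 * σ ^ 2))) =
    fun z => Real.exp (-(1 / (2 * σ ^ 2)) * (z - a) ^ 2) := by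
  funext z; congr 1; ring

lemma integrable_gauss (hσ : 0 < σ) (a : ℝ) :
    Integrable (fun z : ℝ => Real.exp (-(z - a) ^ 2 / (2 * σ ^ 2))) := by
  rw [gauss_eq]
  exact (integrable_exp_neg_mul_sq (by positivity)).comp_sub_right a

lemma total_gauss (hσ : 0 < σ) (a : ℝ) :
    ∫ z : ℝ, Real.exp (-(z - a) ^ 2 / (2 * σ ^ 2)) = σ * Real.sqrt (2 * π) := by
  rw [gauss_eq,
    integral_sub_right_eq_self (fun z : ℝ => Real.exp (-(1 / (2 * σ ^ 2)) * z ^ 2)) a,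
    integral_gaussian,
    show π / (1 / (2 * σ ^ 2)) = σ ^ 2 * (2 * π) by field_simp,
    Real.sqrt_mul (by positivity), Real.sqrt_sq hσ.le]

end aux

section aux2

variable {a σ ε : ℝ}

lemma normCDF_nonneg (hσ : 0 < σ) (a x : ℝ) : 0 ≤ normCDF a σ x := by
  rw [normCDF]
  refine mul_nonneg (by positivity) ?_
  exact setIntegral_nonneg measurableSet_Iic fun z _ => (Real.exp_pos _).le

lemma normCDF_le_one (hσ : 0 < σ) (a x : ℝ) : normCDF a σ x ≤ 1 := by
  rw [normCDF]
  have h := setIntegral_le_integral (μ := volume) (s := Set.Iic x)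
    (integrable_gauss hσ a) (ae_of_all _ fun z => (Real.exp_pos _).le)
  rw [total_gauss hσ a] at h
  have hc : (0:ℝ) < σ * Real.sqrt (2 * π) := by positivity
  calc (σ * Real.sqrt (2 * π))⁻¹ * ∫ z in Set.Iic x, Real.exp (-(z - a) ^ 2 / (2 * σ ^ 2))
      ≤ (σ * Real.sqrt (2 * π))⁻¹ * (σ * Real.sqrt (2 * π)) := by
        exact mul_le_mul_of_nonneg_left h (by positivity)
    _ = 1 := inv_mul_cancel₀ hc.ne'

lemma normCDF_sub (hσ : 0 < σ) (a x y : ℝ) :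
    normCDF a σ y - normCDF a σ x =
      (σ * Real.sqrt (2 * π))⁻¹ * ∫ z in x..y, Real.exp (-(z - a) ^ 2 / (2 * σ ^ 2)) := by
  rw [normCDF, normCDF, ← mul_sub,
    intervalIntegral.integral_Iic_sub_Iic (integrable_gauss hσ a).integrableOn
      (integrable_gauss hσ a).integrableOn]

/-- symmetry : normCDF 0 σ (-x) = 1 - normCDF 0 σ x -/
lemma normCDF_symm (hσ : 0 < σ) (x : ℝ) : normCDF 0 σ (-x) = 1 - normCDF 0 σ x := by
  have hint := integrable_gauss hσ 0
  have h1 : ∫ z in Set.Iic (-x), Real.exp (-(z - 0) ^ 2 / (2 * σ ^ 2))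
      = ∫ z in Set.Ioi x, Real.exp (-(z - 0) ^ 2 / (2 * σ ^ 2)) := by
    have := integral_comp_neg_Iic (-x) (fun z : ℝ => Real.exp (-(z - 0) ^ 2 / (2 * σ ^ 2)))
    rw [neg_neg] at this
    rw [← this]
    congr 1
    funext z
    congr 1
    ring
  have h2 : (∫ z in Set.Iic x, Real.exp (-(z - 0) ^ 2 / (2 * σ ^ 2)))
      + ∫ z in Set.Ioi x, Real.exp (-(z - 0) ^ 2 / (2 * σ ^ 2)) = σ * Real.sqrt (2 * π) := by
    rw [intervalIntegral.integral_Iic_add_Ioi hint.integrableOn hint.integrableOn,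
      total_gauss hσ 0]
  have hc : (0:ℝ) < σ * Real.sqrt (2 * π) := by positivity
  have h3 : ∫ z in Set.Ioi x, Real.exp (-(z - 0) ^ 2 / (2 * σ ^ 2))
      = σ * Real.sqrt (2 * π) - ∫ z in Set.Iic x, Real.exp (-(z - 0) ^ 2 / (2 * σ ^ 2)) := by
    linarith
  rw [normCDF, normCDF, h1, h3, mul_sub, inv_mul_cancel₀ hc.ne']

end aux2

section aux3

variable {σ ε : ℝ}

lemma interval_gauss_le_aux (hσ : 0 < σ) (hε : 0 < ε) (u : ℝ) (hu : -(ε/2) ≤ u) :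
    ∫ z in u..(u+ε), Real.exp (-(z - 0) ^ 2 / (2 * σ ^ 2)) ≤
      ∫ z in (-(ε/2))..(ε/2), Real.exp (-(z - 0) ^ 2 / (2 * σ ^ 2)) := by
  set φ : ℝ → ℝ := fun z => Real.exp (-(z - 0) ^ 2 / (2 * σ ^ 2)) with hφ
  have hint := integrable_gauss hσ 0
  have hII : ∀ p q : ℝ, IntervalIntegrable φ volume p q := fun p q => hint.intervalIntegrable
  have hshift : Integrable (fun z : ℝ => φ (z + ε)) := by
    have h := hint.comp_sub_right (-ε)
    have he : (fun z : ℝ => φ (z + ε))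
        = fun z : ℝ => Real.exp (-((z - -ε) - 0) ^ 2 / (2 * σ ^ 2)) := by
      funext z; simp only [hφ]; congr 1; ring
    rw [he]; exact h
  have e1 : ∫ z in u..(u+ε), φ z = (∫ z in u..(ε/2), φ z) + ∫ z in (ε/2)..(u+ε), φ z :=
    (intervalIntegral.integral_add_adjacent_intervals (hII _ _) (hII _ _)).symm
  have e2 : ∫ z in (-(ε/2))..(ε/2), φ z = (∫ z in (-(ε/2))..u, φ z) + ∫ z in u..(ε/2), φ z :=
    (intervalIntegral.integral_add_adjacent_intervals (hII _ _) (hII _ _)).symm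
  have e3 : ∫ z in (ε/2)..(u+ε), φ z = ∫ z in (-(ε/2))..u, φ (z + ε) := by
    rw [intervalIntegral.integral_comp_add_right]
    congr 1
    ring
  have mono : ∫ z in (-(ε/2))..u, φ (z + ε) ≤ ∫ z in (-(ε/2))..u, φ z := by
    apply intervalIntegral.integral_mono_on hu hshift.intervalIntegrable (hII _ _)
    intro z hz
    have hz1 : -(ε/2) ≤ z := hz.1
    have h2 : (0:ℝ) < 2 * σ ^ 2 := by positivity
    exact Real.exp_le_exp.mpr ((div_le_div_iff_of_pos_right h2).mpr (by nlinarith))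
  linarith [e1, e2, e3, mono]

lemma interval_gauss_le (hσ : 0 < σ) (hε : 0 < ε) (u : ℝ) :
    ∫ z in u..(u+ε), Real.exp (-(z - 0) ^ 2 / (2 * σ ^ 2)) ≤
      ∫ z in (-(ε/2))..(ε/2), Real.exp (-(z - 0) ^ 2 / (2 * σ ^ 2)) := by
  rcases le_or_gt (-(ε/2)) u with hu | hu
  · exact interval_gauss_le_aux hσ hε u hu
  · have heven : ∀ z : ℝ, Real.exp (-(z - 0) ^ 2 / (2 * σ ^ 2))
        = Real.exp (-((-z) - 0) ^ 2 / (2 * σ ^ 2)) := by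
      intro z; congr 1; ring
    have e : ∫ z in u..(u+ε), Real.exp (-(z - 0) ^ 2 / (2 * σ ^ 2))
        = ∫ z in (-(u+ε))..(-u), Real.exp (-(z - 0) ^ 2 / (2 * σ ^ 2)) := by
      rw [← intervalIntegral.integral_comp_neg]
      apply intervalIntegral.integral_congr
      intro z _
      exact heven z
    rw [e]
    have h := interval_gauss_le_aux hσ hε (-(u+ε)) (by linarith)
    rw [show -(u+ε)+ε = -u by ring] at h
    exact h

lemma delta_eq (hσ : 0 < σ) (hε : 0 < ε) :
    2 * normCDF 0 σ (ε/2) - 1 =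
      (σ * Real.sqrt (2 * π))⁻¹ * ∫ z in (-(ε/2))..(ε/2), Real.exp (-(z - 0) ^ 2 / (2 * σ ^ 2)) := by
  have h := normCDF_symm hσ (ε/2)
  have h2 := normCDF_sub hσ 0 (-(ε/2)) (ε/2)
  linarith

lemma delta_nonneg (hσ : 0 < σ) (hε : 0 < ε) : 0 ≤ 2 * normCDF 0 σ (ε/2) - 1 := by
  rw [delta_eq hσ hε]
  refine mul_nonneg (by positivity) ?_
  exact intervalIntegral.integral_nonneg (by linarith) fun z _ => (Real.exp_pos _).le

lemma increment_le (hσ : 0 < σ) (hε : 0 < ε) (a x : ℝ) :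
    normCDF a σ (x + ε) - normCDF a σ x ≤ 2 * normCDF 0 σ (ε/2) - 1 := by
  rw [normCDF_sub hσ a x (x + ε), delta_eq hσ hε]
  refine mul_le_mul_of_nonneg_left ?_ (by positivity)
  have h := intervalIntegral.integral_comp_sub_right (a := x) (b := x + ε)
    (fun z : ℝ => Real.exp (-(z - 0) ^ 2 / (2 * σ ^ 2))) a
  have hcongr : ∫ z in x..(x+ε), Real.exp (-(z - a) ^ 2 / (2 * σ ^ 2))
      = ∫ z in x..(x+ε), Real.exp (-((z - a) - 0) ^ 2 / (2 * σ ^ 2)) :=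
    intervalIntegral.integral_congr (fun z _ => by congr 1; ring)
  rw [hcongr, h]
  have h2 := interval_gauss_le hσ hε (x - a)
  rw [show (x - a) + ε = x + ε - a by ring] at h2
  exact h2

end aux3

section prob

variable {Ω : Type*} [MeasurableSpace Ω]

lemma cdf_le_one (P : Measure Ω) [IsProbabilityMeasure P] (ξ : Ω → ℝ) (x : ℝ) :
    cdf P ξ x ≤ 1 := by
  rw [cdf]
  have h : P {ω | ξ ω < x} ≤ 1 := prob_le_one
  calc (P {ω | ξ ω < x}).toReal ≤ (1 : ENNReal).toReal :=
        ENNReal.toReal_mono ENNReal.one_ne_top h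
    _ = 1 := ENNReal.toReal_one

lemma cdf_nonneg (P : Measure Ω) (ξ : Ω → ℝ) (x : ℝ) : 0 ≤ cdf P ξ x :=
  ENNReal.toReal_nonneg

lemma prob_sub_le (P : Measure Ω) [IsProbabilityMeasure P] {A B C : Set Ω}
    (h : A ⊆ B ∪ C) : (P A).toReal ≤ (P B).toReal + (P C).toReal := by
  have h1 : P A ≤ P B + P C := (measure_mono h).trans (measure_union_le _ _)
  have h2 : P B + P C ≠ ⊤ := ENNReal.add_ne_top.mpr ⟨measure_ne_top _ _, measure_ne_top _ _⟩
  calc (P A).toReal ≤ (P B + P C).toReal := ENNReal.toReal_mono h2 h1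
    _ = (P B).toReal + (P C).toReal := ENNReal.toReal_add (measure_ne_top _ _) (measure_ne_top _ _)

lemma cdf_add_le (P : Measure Ω) [IsProbabilityMeasure P] (ζ η : Ω → ℝ) {ε : ℝ}
    (hε : 0 < ε) (x : ℝ) :
    cdf P (fun ω => ζ ω + η ω) x ≤ cdf P ζ (x + ε) + (P {ω | ε < |η ω|}).toReal := by
  apply prob_sub_le
  intro ω hω
  simp only [Set.mem_setOf_eq] at hω
  by_cases h : ε < |η ω|
  · exact Or.inr h
  · push_neg at h
    have h2 := (abs_le.mp h).1
    exact Or.inl (by simp only [Set.mem_setOf_eq]; linarith)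

lemma cdf_add_ge (P : Measure Ω) [IsProbabilityMeasure P] (ζ η : Ω → ℝ) {ε : ℝ}
    (hε : 0 < ε) (x : ℝ) :
    cdf P ζ (x - ε) ≤ cdf P (fun ω => ζ ω + η ω) x + (P {ω | ε < |η ω|}).toReal := by
  apply prob_sub_le
  intro ω hω
  simp only [Set.mem_setOf_eq] at hω
  by_cases h : ε < |η ω|
  · exact Or.inr h
  · push_neg at h
    have h2 := (abs_le.mp h).2
    exact Or.inl (by simp only [Set.mem_setOf_eq]; linarith)

end prob

/-- Smoothing inequality:
`ρ(F_{ζ+η}, Φ_{a,σ}) ≤ ρ(F_ζ, Φ_{a,σ}) + [2Φ_{0,σ}(ε/2) − 1] + P(|η| > ε)`. -/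
theorem smoothing_inequality {Ω : Type*} [MeasurableSpace Ω] (P : Measure Ω)
    [IsProbabilityMeasure P] (ζ η : Ω → ℝ) (hζ : Measurable ζ) (hη : Measurable η)
    (a σ ε : ℝ) (hσ : 0 < σ) (hε : 0 < ε) :
    kolmDist (cdf P (fun ω => ζ ω + η ω)) (normCDF a σ) ≤
      kolmDist (cdf P ζ) (normCDF a σ) + (2 * normCDF 0 σ (ε / 2) - 1) +
        (P {ω | ε < |η ω|}).toReal := by
  have hbound : ∀ y, |cdf P ζ y - normCDF a σ y| ≤ 2 := by
    intro y
    have h1 := cdf_le_one P ζ y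
    have h2 := cdf_nonneg P ζ y
    have h3 := normCDF_le_one hσ a y
    have h4 := normCDF_nonneg hσ a y
    rw [abs_sub_le_iff]
    constructor <;> linarith
  have hbdd : BddAbove (Set.range fun y => |cdf P ζ y - normCDF a σ y|) :=
    ⟨2, by rintro _ ⟨y, rfl⟩; exact hbound y⟩
  have hρle : ∀ y, |cdf P ζ y - normCDF a σ y| ≤ kolmDist (cdf P ζ) (normCDF a σ) :=
    fun y => le_ciSup hbdd y
  have hρ0 : 0 ≤ kolmDist (cdf P ζ) (normCDF a σ) := Real.iSup_nonneg fun y => abs_nonneg _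
  have hΔ0 : 0 ≤ 2 * normCDF 0 σ (ε / 2) - 1 := delta_nonneg hσ (by linarith)
  have hp0 : (0:ℝ) ≤ (P {ω | ε < |η ω|}).toReal := ENNReal.toReal_nonneg
  rw [kolmDist]
  apply Real.iSup_le _ (by linarith)
  intro x
  rw [abs_sub_le_iff]
  constructor
  · have h1 := cdf_add_le P ζ η hε x
    have h2 := (abs_le.mp (hρle (x + ε))).2
    have h3 := increment_le hσ hε a x
    linarith
  · have h1 := cdf_add_ge P ζ η hε x
    have h2 := (abs_le.mp (hρle (x - ε))).1
    have h3 := increment_le hσ hε a (x - ε)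
    rw [sub_add_cancel] at h3
    linarith
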